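/- Let D₁ and D₂ be directed graphs with common vertex set V_com = V(D₁) ∩ V(D₂), and let V₁, V₂ be vertex subsets with V_com ⊆ V₁ ⊆ V(D₁) and V_com ⊆ V₂ ⊆ V(D₂). Then the reachability relation of D₁ ∪ D₂ restricted to V₁ ∪ V₂ equals the transitive closure of the union of the reachability relation of D₁ restricted to V₁ and the reachability relation of D₂ restricted to V₂. -/

import Mathlib

/-- `ConR V' A` : reachability relation (by nonempty directed paths, i.e. the
transitive closure of the arc relation) restricted to the vertex set `V'`. -/
def ConR {α : Type*} (V' : Set α) (A : α → α → Prop) : α → α → Prop :=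
  fun x y => x ∈ V' ∧ y ∈ V' ∧ Relation.TransGen A x y

theorem stmt1 {α : Type*} (VD1 VD2 V1 V2 : Set α) (A1 A2 : α → α → Prop)
    (hA1 : ∀ x y, A1 x y → x ∈ VD1 ∧ y ∈ VD1)
    (hA2 : ∀ x y, A2 x y → x ∈ VD2 ∧ y ∈ VD2)
    (hc1 : VD1 ∩ VD2 ⊆ V1) (h1 : V1 ⊆ VD1)
    (hc2 : VD1 ∩ VD2 ⊆ V2) (h2 : V2 ⊆ VD2) :
    ConR (V1 ∪ V2) (fun x y => A1 x y ∨ A2 x y) =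
      Relation.TransGen (fun x y => ConR V1 A1 x y ∨ ConR V2 A2 x y) := by
  have key : ∀ x y, Relation.TransGen (fun a b => A1 a b ∨ A2 a b) x y →
      ((∀ a, a ∈ V1 → Relation.ReflTransGen A1 a x → y ∈ V1 ∪ V2 →
          Relation.TransGen (fun u v => ConR V1 A1 u v ∨ ConR V2 A2 u v) a y) ∧
       (∀ a, a ∈ V2 → Relation.ReflTransGen A2 a x → y ∈ V1 ∪ V2 →
          Relation.TransGen (fun u v => ConR V1 A1 u v ∨ ConR V2 A2 u v) a y)) := by
    intro x y h
    induction h using Relation.TransGen.head_induction_on with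
    | single h =>
      rename_i x
      constructor
      · intro a ha rtg hy
        rcases h with h | h
        · have htg : Relation.TransGen A1 a y := Relation.TransGen.tail' rtg h
          have hyV1 : y ∈ V1 := by
            rcases hy with hy | hy
            · exact hy
            · exact hc1 ⟨(hA1 _ _ h).2, h2 hy⟩
          exact Relation.TransGen.single (Or.inl ⟨ha, hyV1, htg⟩)
        · have hxVD1 : x ∈ VD1 := by
            rcases rtg.cases_tail with rfl | ⟨c, _, hcb⟩
            · exact h1 ha
            · exact (hA1 _ _ hcb).2
          have hxV2 : x ∈ V2 := hc2 ⟨hxVD1, (hA2 _ _ h).1⟩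
          have hxV1 : x ∈ V1 := hc1 ⟨hxVD1, (hA2 _ _ h).1⟩
          have hyV2 : y ∈ V2 := by
            rcases hy with hy | hy
            · exact hc2 ⟨h1 hy, (hA2 _ _ h).2⟩
            · exact hy
          have seg2 : Relation.TransGen (fun u v => ConR V1 A1 u v ∨ ConR V2 A2 u v) x y :=
            Relation.TransGen.single (Or.inr ⟨hxV2, hyV2, Relation.TransGen.single h⟩)
          rcases rtg.cases_tail with rfl | ⟨c, hac, hcb⟩
          · exact seg2
          · exact Relation.TransGen.head
              (Or.inl ⟨ha, hxV1, Relation.TransGen.tail' hac hcb⟩) seg2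
      · intro a ha rtg hy
        rcases h with h | h
        · have hxVD2 : x ∈ VD2 := by
            rcases rtg.cases_tail with rfl | ⟨c, _, hcb⟩
            · exact h2 ha
            · exact (hA2 _ _ hcb).2
          have hxV1 : x ∈ V1 := hc1 ⟨(hA1 _ _ h).1, hxVD2⟩
          have hxV2 : x ∈ V2 := hc2 ⟨(hA1 _ _ h).1, hxVD2⟩
          have hyV1 : y ∈ V1 := by
            rcases hy with hy | hy
            · exact hy
            · exact hc1 ⟨(hA1 _ _ h).2, h2 hy⟩
          have seg1 : Relation.TransGen (fun u v => ConR V1 A1 u v ∨ ConR V2 A2 u v) x y :=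
            Relation.TransGen.single (Or.inl ⟨hxV1, hyV1, Relation.TransGen.single h⟩)
          rcases rtg.cases_tail with rfl | ⟨c, hac, hcb⟩
          · exact seg1
          · exact Relation.TransGen.head
              (Or.inr ⟨ha, hxV2, Relation.TransGen.tail' hac hcb⟩) seg1
        · have htg : Relation.TransGen A2 a y := Relation.TransGen.tail' rtg h
          have hyV2 : y ∈ V2 := by
            rcases hy with hy | hy
            · exact hc2 ⟨h1 hy, (hA2 _ _ h).2⟩
            · exact hy
          exact Relation.TransGen.single (Or.inr ⟨ha, hyV2, htg⟩)
    | head hxc hcy ih =>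
      rename_i x c
      constructor
      · intro a ha rtg hy
        rcases hxc with h | h
        · exact ih.1 a ha (rtg.tail h) hy
        · have hxVD1 : x ∈ VD1 := by
            rcases rtg.cases_tail with rfl | ⟨b, _, hbx⟩
            · exact h1 ha
            · exact (hA1 _ _ hbx).2
          have hxV2 : x ∈ V2 := hc2 ⟨hxVD1, (hA2 _ _ h).1⟩
          have hxV1 : x ∈ V1 := hc1 ⟨hxVD1, (hA2 _ _ h).1⟩
          have rest := ih.2 x hxV2 (Relation.ReflTransGen.single h) hy
          rcases rtg.cases_tail with rfl | ⟨b, hab, hbx⟩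
          · exact rest
          · exact Relation.TransGen.head
              (Or.inl ⟨ha, hxV1, Relation.TransGen.tail' hab hbx⟩) rest
      · intro a ha rtg hy
        rcases hxc with h | h
        · have hxVD2 : x ∈ VD2 := by
            rcases rtg.cases_tail with rfl | ⟨b, _, hbx⟩
            · exact h2 ha
            · exact (hA2 _ _ hbx).2
          have hxV1 : x ∈ V1 := hc1 ⟨(hA1 _ _ h).1, hxVD2⟩
          have hxV2 : x ∈ V2 := hc2 ⟨(hA1 _ _ h).1, hxVD2⟩
          have rest := ih.1 x hxV1 (Relation.ReflTransGen.single h) hy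
          rcases rtg.cases_tail with rfl | ⟨b, hab, hbx⟩
          · exact rest
          · exact Relation.TransGen.head
              (Or.inr ⟨ha, hxV2, Relation.TransGen.tail' hab hbx⟩) rest
        · exact ih.2 a ha (rtg.tail h) hy
  funext x y
  apply propext
  constructor
  · rintro ⟨hx, hy, htg⟩
    rcases hx with hx | hx
    · exact (key x y htg).1 x hx Relation.ReflTransGen.refl hy
    · exact (key x y htg).2 x hx Relation.ReflTransGen.refl hy
  · intro h
    induction h with
    | single h =>
      rcases h with ⟨hu, hv, htg⟩ | ⟨hu, hv, htg⟩
      · exact ⟨Or.inl hu, Or.inl hv, Relation.TransGen.mono (fun _ _ => Or.inl) _ _ htg⟩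
      · exact ⟨Or.inr hu, Or.inr hv, Relation.TransGen.mono (fun _ _ => Or.inr) _ _ htg⟩
    | tail h1' h2' ih =>
      rcases h2' with ⟨hu, hv, htg⟩ | ⟨hu, hv, htg⟩
      · exact ⟨ih.1, Or.inl hv, ih.2.2.trans (Relation.TransGen.mono (fun _ _ => Or.inl) _ _ htg)⟩
      · exact ⟨ih.1, Or.inr hv, ih.2.2.trans (Relation.TransGen.mono (fun _ _ => Or.inr) _ _ htg)⟩
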